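/- Let R be a finite ring, let U be a subgroup of R^× with -1 ∈ U, and let S ⊆ R with 0 ∉ S and U S U = S. Assume Γ(R,U) is connected, and assume Γ(R,S) is connected and its complement graph is connected. Then Γ(R,S) is not prime if and only if there exists a two-sided ideal I of R with I ≠ 0 and I ≠ R such that I is a homogeneous set of Γ(R,S). -/

import Mathlib

/-- The Cayley graph `Γ(R,S)` of a ring `R` with connection set `S`. -/
def cayleyGraph {R : Type*} [Ring R] (S : Set R) : SimpleGraph R :=
  SimpleGraph.fromRel (fun a b => a - b ∈ S)

/-- The image in `R` of a subgroup `U` of the unit group `Rˣ`. -/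
def unitsSet (R : Type*) [Ring R] (U : Subgroup Rˣ) : Set R :=
  (fun u : Rˣ => (u : R)) '' (U : Set Rˣ)

/-- `X` is a homogeneous set of `G`: every vertex outside `X` is adjacent to all of `X`
or to none of `X`. -/
def IsHomogeneousSet {V : Type*} (G : SimpleGraph V) (X : Set V) : Prop :=
  ∀ v ∉ X, (∀ x ∈ X, G.Adj v x) ∨ (∀ x ∈ X, ¬ G.Adj v x)

/-- A graph on a finite vertex set is prime if it has no nontrivial homogeneous set,
i.e. no homogeneous set `X` with `2 ≤ |X| < |V|`. -/
def IsPrimeGraph {V : Type*} [Fintype V] (G : SimpleGraph V) : Prop :=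
  ¬ ∃ X : Set V, IsHomogeneousSet G X ∧ 2 ≤ X.ncard ∧ X.ncard < Fintype.card V

/-- Along a walk from inside `C` to outside `C` there is an edge crossing `C`. -/
lemma exists_adj_cross {V : Type*} {H : SimpleGraph V} (C : Set V) {c b : V}
    (w : H.Walk c b) (hc : c ∈ C) (hb : b ∉ C) :
    ∃ x ∈ C, ∃ y, y ∉ C ∧ H.Adj x y := by
  induction w with
  | nil => exact absurd hc hb
  | @cons u v t h p ih =>
    by_cases hv : v ∈ C
    · exact ih hv hb
    · exact ⟨u, hc, v, hv, h⟩

/-- The image of a homogeneous set under an adjacency-preserving bijection is homogeneous. -/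
lemma isHomogeneousSet_image {V : Type*} {G : SimpleGraph V} {X : Set V} (e : V ≃ V)
    (hadj : ∀ a b, G.Adj (e a) (e b) ↔ G.Adj a b)
    (hX : IsHomogeneousSet G X) : IsHomogeneousSet G (e '' X) := by
  intro v hv
  have hv' : e.symm v ∉ X := by
    intro h
    exact hv ⟨e.symm v, h, e.apply_symm_apply v⟩
  rcases hX _ hv' with h | h
  · left
    rintro x ⟨x', hx', rfl⟩
    have := h x' hx'
    rw [← hadj] at this
    simpa using this
  · right
    rintro x ⟨x', hx', rfl⟩
    have := h x' hx'
    rw [← hadj] at this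
    simpa using this

theorem stmt3 {R : Type*} [Ring R] [Fintype R]
    (U : Subgroup Rˣ) (hU : -1 ∈ U)
    (S : Set R) (h0 : (0 : R) ∉ S)
    (hstab : ∀ u₁ ∈ U, ∀ u₂ ∈ U, ∀ s ∈ S, ((u₁ : Rˣ) : R) * s * ((u₂ : Rˣ) : R) ∈ S)
    (hconnU : (cayleyGraph (unitsSet R U)).Connected)
    (hconnS : (cayleyGraph S).Connected)
    (hanti : (cayleyGraph S)ᶜ.Connected) :
    ¬ IsPrimeGraph (cayleyGraph S) ↔
      ∃ I : TwoSidedIdeal R, I ≠ ⊥ ∧ I ≠ ⊤ ∧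
        IsHomogeneousSet (cayleyGraph S) {x : R | x ∈ I} := by
  classical
  set G := cayleyGraph S with hG
  -- S is symmetric
  have hsymm : ∀ s ∈ S, -s ∈ S := by
    intro s hs
    have := hstab (-1) hU 1 (one_mem U) s hs
    simpa using this
  -- adjacency characterization
  have hadj : ∀ a b : R, G.Adj a b ↔ a ≠ b ∧ a - b ∈ S := by
    intro a b
    rw [hG, cayleyGraph, SimpleGraph.fromRel_adj]
    constructor
    · rintro ⟨hne, h | h⟩
      · exact ⟨hne, h⟩
      · refine ⟨hne, ?_⟩
        have := hsymm _ h
        simpa using this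
    · rintro ⟨hne, h⟩
      exact ⟨hne, Or.inl h⟩
  -- multiplication by a unit of U preserves S-membership
  have hSl : ∀ u ∈ U, ∀ s : R, s ∈ S ↔ ((u : Rˣ) : R) * s ∈ S := by
    intro u hu s
    constructor
    · intro hs
      have := hstab u hu 1 (one_mem U) s hs
      simpa using this
    · intro hs
      have := hstab u⁻¹ (inv_mem hu) 1 (one_mem U) _ hs
      simpa [← mul_assoc] using this
  have hSr : ∀ u ∈ U, ∀ s : R, s ∈ S ↔ s * ((u : Rˣ) : R) ∈ S := by
    intro u hu s
    constructor
    · intro hs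
      have := hstab 1 (one_mem U) u hu s hs
      simpa using this
    · intro hs
      have := hstab 1 (one_mem U) u⁻¹ (inv_mem hu) _ hs
      simpa [mul_assoc] using this
  constructor
  · -- hard direction
    intro hnp
    rw [IsPrimeGraph, not_not] at hnp
    obtain ⟨X, hXhom, hX2, hXlt⟩ := hnp
    -- the property of being a proper homogeneous set containing 0
    set P : Set R → Prop :=
      fun Y => IsHomogeneousSet G Y ∧ (0 : R) ∈ Y ∧ ∃ v, v ∉ Y with hP
    -- translations preserve homogeneous sets
    have htrans : ∀ (c : R) (Y : Set R), IsHomogeneousSet G Y →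
        IsHomogeneousSet G ((Equiv.subRight c) '' Y) := by
      intro c Y hY
      refine isHomogeneousSet_image _ (fun a b => ?_) hY
      simp only [Equiv.subRight_apply]
      rw [hadj, hadj]
      constructor
      · rintro ⟨hne, h⟩
        refine ⟨fun h' => hne (by rw [h']), ?_⟩
        convert h using 1; abel
      · rintro ⟨hne, h⟩
        refine ⟨fun h' => hne (by simpa using congrArg (· + c) h'), ?_⟩
        convert h using 1; abel
    -- union of two proper homogeneous sets containing 0 is again such
    have hunion : ∀ Y Z : Set R, P Y → P Z → P (Y ∪ Z) := by
      rintro Y Z ⟨hYh, hY0, vY, hvY⟩ ⟨hZh, hZ0, vZ, hvZ⟩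
      refine ⟨?_, Or.inl hY0, ?_⟩
      · -- homogeneous
        intro v hv
        rw [Set.mem_union] at hv
        push_neg at hv
        rcases hYh v hv.1 with h1 | h1 <;> rcases hZh v hv.2 with h2 | h2
        · left; rintro x (hx | hx); exacts [h1 x hx, h2 x hx]
        · exact absurd (h1 0 hY0) (h2 0 hZ0)
        · exact absurd (h2 0 hZ0) (h1 0 hY0)
        · right; rintro x (hx | hx); exacts [h1 x hx, h2 x hx]
      · -- proper
        by_contra hall
        push_neg at hall
        have huniv : ∀ x : R, x ∈ Y ∪ Z := hall
        have ha₀ : vZ ∈ Y := (huniv vZ).resolve_right hvZ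
        have hb₀ : vY ∈ Z := (huniv vY).resolve_left hvY
        -- vZ ∈ Y \ Z plays the role of a₀, vY ∈ Z \ Y of b₀
        rcases hZh vZ hvZ with hcom | hanti'
        · -- vZ complete to Z : derive that complement is disconnected across Y ∩ Z
          have hBX : ∀ b ∈ Z, b ∉ Y → ∀ x ∈ Y, G.Adj b x := by
            intro b hbZ hbY
            rcases hYh b hbY with h | h
            · exact h
            · exact absurd ((hcom b hbZ).symm) (h vZ ha₀)
          have hAY : ∀ a ∈ Y, a ∉ Z → ∀ y ∈ Z, G.Adj a y := by
            intro a haY haZ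
            rcases hZh a haZ with h | h
            · exact h
            · exact absurd ((hBX vY hb₀ hvY a haY).symm) (h vY hb₀)
          -- every vertex of Y ∩ Z is G-adjacent to every vertex outside
          have hcross : ∀ x ∈ Y ∩ Z, ∀ y, y ∉ Y ∩ Z → ¬ Gᶜ.Adj x y := by
            rintro x ⟨hxY, hxZ⟩ y hy hadj'
            rw [SimpleGraph.compl_adj] at hadj'
            rcases huniv y with hyY | hyZ
            · have hyZ : y ∉ Z := fun h => hy ⟨hyY, h⟩
              exact hadj'.2 (hAY y hyY hyZ x hxZ).symm
            · by_cases hyY : y ∈ Y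
              · exact hy ⟨hyY, hyZ⟩
              · exact hadj'.2 (hBX y hyZ hyY x hxY).symm
          obtain ⟨w⟩ := (hanti.preconnected 0 vZ)
          obtain ⟨x, hx, y, hy, hxy⟩ :=
            exists_adj_cross (Y ∩ Z) w ⟨hY0, hZ0⟩ (fun h => hvZ h.2)
          exact hcross x hx y hy hxy
        · -- vZ anticomplete to Z : derive that G is disconnected across Y ∩ Z
          have hBX : ∀ b ∈ Z, b ∉ Y → ∀ x ∈ Y, ¬ G.Adj b x := by
            intro b hbZ hbY
            rcases hYh b hbY with h | h
            · exact absurd ((h vZ ha₀).symm) (hanti' b hbZ)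
            · exact h
          have hAY : ∀ a ∈ Y, a ∉ Z → ∀ y ∈ Z, ¬ G.Adj a y := by
            intro a haY haZ
            rcases hZh a haZ with h | h
            · exact absurd ((h vY hb₀).symm) (hBX vY hb₀ hvY a haY)
            · exact h
          have hcross : ∀ x ∈ Y ∩ Z, ∀ y, y ∉ Y ∩ Z → ¬ G.Adj x y := by
            rintro x ⟨hxY, hxZ⟩ y hy hadj'
            rcases huniv y with hyY | hyZ
            · have hyZ : y ∉ Z := fun h => hy ⟨hyY, h⟩
              exact hAY y hyY hyZ x hxZ hadj'.symm
            · by_cases hyY : y ∈ Y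
              · exact hy ⟨hyY, hyZ⟩
              · exact hBX y hyZ hyY x hxY hadj'.symm
          obtain ⟨w⟩ := (hconnS.preconnected 0 vZ)
          obtain ⟨x, hx, y, hy, hxy⟩ :=
            exists_adj_cross (Y ∩ Z) w ⟨hY0, hZ0⟩ (fun h => hvZ h.2)
          exact hcross x hx y hy hxy
    -- a proper homogeneous set containing 0 and a nonzero element exists
    have hXne : X ≠ Set.univ := by
      intro h
      rw [h, Set.ncard_univ, Nat.card_eq_fintype_card] at hXlt
      exact lt_irrefl _ hXlt
    obtain ⟨x₀, x₁, hx₀, hx₁, hne01⟩ := (Set.one_lt_ncard_iff X.toFinite).1 hX2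
    obtain ⟨v₀, hv₀⟩ : ∃ v, v ∉ X := by
      by_contra h
      push_neg at h
      exact hXne (Set.eq_univ_iff_forall.2 h)
    set X₀ : Set R := (Equiv.subRight x₀) '' X with hX₀def
    have hPX₀ : P X₀ := by
      refine ⟨htrans x₀ X hXhom, ⟨x₀, hx₀, by simp⟩, v₀ - x₀, ?_⟩
      rintro ⟨x, hx, hxe⟩
      simp only [Equiv.subRight_apply] at hxe
      have : x = v₀ := by
        have := congrArg (· + x₀) hxe
        simpa using this
      exact hv₀ (this ▸ hx)
    have hm₀ : x₁ - x₀ ∈ X₀ ∧ x₁ - x₀ ≠ 0 := by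
      constructor
      · exact ⟨x₁, hx₁, rfl⟩
      · intro h
        exact hne01 (sub_eq_zero.mp h).symm
    -- choose a maximal element of the family
    have hfin : {Y : Set R | P Y}.Finite := Set.toFinite _
    obtain ⟨M, hMP, hMmax⟩ :=
      Set.Finite.exists_maximalFor id {Y : Set R | P Y} hfin ⟨X₀, hPX₀⟩
    obtain ⟨hMh, hM0, vM, hvM⟩ := hMP
    have habsorb : ∀ Y : Set R, P Y → Y ⊆ M := by
      intro Y hY
      have hPU : P (Y ∪ M) := hunion Y M hY ⟨hMh, hM0, vM, hvM⟩
      have : Y ∪ M ⊆ M := hMmax hPU Set.subset_union_right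
      exact Set.subset_union_left.trans this
    have hX₀M : X₀ ⊆ M := habsorb X₀ hPX₀
    -- M is closed under subtraction
    have hsub : ∀ a ∈ M, ∀ b ∈ M, a - b ∈ M := by
      intro a ha b hb
      have hP' : P ((Equiv.subRight b) '' M) := by
        refine ⟨htrans b M hMh, ⟨b, hb, by simp⟩, vM - b, ?_⟩
        rintro ⟨x, hx, hxe⟩
        simp only [Equiv.subRight_apply] at hxe
        have : x = vM := by
          have := congrArg (· + b) hxe
          simpa using this
        exact hvM (this ▸ hx)
      exact habsorb _ hP' ⟨a, ha, rfl⟩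
    have hneg : ∀ a ∈ M, -a ∈ M := fun a ha => by
      have := hsub 0 hM0 a ha; simpa using this
    have hadd : ∀ a ∈ M, ∀ b ∈ M, a + b ∈ M := fun a ha b hb => by
      have := hsub a ha (-b) (hneg b hb); simpa using this
    -- M is closed under multiplication by units of U, on both sides
    have hmull : ∀ u ∈ U, ∀ a ∈ M, ((u : Rˣ) : R) * a ∈ M := by
      intro u hu a ha
      have he : ∀ x y : R, G.Adj ((Units.mulLeft (u : Rˣ)) x) ((Units.mulLeft (u : Rˣ)) y)
          ↔ G.Adj x y := by
        intro x y
        rw [hadj, hadj]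
        simp only [Units.mulLeft_apply]
        constructor
        · rintro ⟨hne, h⟩
          refine ⟨fun h' => hne (by rw [h']), ?_⟩
          rw [hSl u hu, mul_sub]
          exact h
        · rintro ⟨hne, h⟩
          constructor
          · intro h'
            apply hne
            have := congrArg (fun t => ((((u : Rˣ)⁻¹ : Rˣ) : R)) * t) h'
            simpa [← mul_assoc] using this
          · rw [show ((u : Rˣ) : R) * x - ((u : Rˣ) : R) * y
                = ((u : Rˣ) : R) * (x - y) by noncomm_ring]
            exact (hSl u hu _).1 h
      have hP' : P ((Units.mulLeft (u : Rˣ)) '' M) := by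
        refine ⟨isHomogeneousSet_image _ he hMh, ⟨0, hM0, by simp⟩,
          ((u : Rˣ) : R) * vM, ?_⟩
        rintro ⟨x, hx, hxe⟩
        simp only [Units.mulLeft_apply] at hxe
        have : x = vM := by
          have := congrArg (fun t => ((((u : Rˣ)⁻¹ : Rˣ) : R)) * t) hxe
          simpa [← mul_assoc] using this
        exact hvM (this ▸ hx)
      exact habsorb _ hP' ⟨a, ha, rfl⟩
    have hmulr : ∀ u ∈ U, ∀ a ∈ M, a * ((u : Rˣ) : R) ∈ M := by
      intro u hu a ha
      have he : ∀ x y : R, G.Adj ((Units.mulRight (u : Rˣ)) x) ((Units.mulRight (u : Rˣ)) y)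
          ↔ G.Adj x y := by
        intro x y
        rw [hadj, hadj]
        simp only [Units.mulRight_apply]
        constructor
        · rintro ⟨hne, h⟩
          refine ⟨fun h' => hne (by rw [h']), ?_⟩
          rw [hSr u hu, sub_mul]
          exact h
        · rintro ⟨hne, h⟩
          constructor
          · intro h'
            apply hne
            have := congrArg (fun t => t * ((((u : Rˣ)⁻¹ : Rˣ) : R))) h'
            simpa [mul_assoc] using this
          · rw [show x * ((u : Rˣ) : R) - y * ((u : Rˣ) : R)
                = (x - y) * ((u : Rˣ) : R) by noncomm_ring]
            exact (hSr u hu _).1 h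
      have hP' : P ((Units.mulRight (u : Rˣ)) '' M) := by
        refine ⟨isHomogeneousSet_image _ he hMh, ⟨0, hM0, by simp⟩,
          vM * ((u : Rˣ) : R), ?_⟩
        rintro ⟨x, hx, hxe⟩
        simp only [Units.mulRight_apply] at hxe
        have : x = vM := by
          have := congrArg (fun t => t * ((((u : Rˣ)⁻¹ : Rˣ) : R))) hxe
          simpa [mul_assoc] using this
        exact hvM (this ▸ hx)
      exact habsorb _ hP' ⟨a, ha, rfl⟩
    -- every element of R is in the additive closure of unitsSet R U
    have hgen : ∀ r : R, r ∈ AddSubgroup.closure (unitsSet R U) := by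
      intro r
      obtain ⟨w⟩ := hconnU.preconnected r 0
      have key : ∀ (a b : R) (_ : (cayleyGraph (unitsSet R U)).Walk a b),
          a - b ∈ AddSubgroup.closure (unitsSet R U) := by
        intro a b w
        induction w with
        | nil => simpa using AddSubgroup.zero_mem _
        | @cons x y t h p ih =>
          have hxy : x - y ∈ AddSubgroup.closure (unitsSet R U) := by
            rw [cayleyGraph, SimpleGraph.fromRel_adj] at h
            rcases h.2 with h' | h'
            · exact AddSubgroup.subset_closure h'
            · have := AddSubgroup.neg_mem _ (AddSubgroup.subset_closure h')
              simpa using this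
          have := AddSubgroup.add_mem _ hxy ih
          simpa using this
      have := key r 0 w
      simpa using this
    -- M is a two-sided ideal
    have hmulL : ∀ (r : R), ∀ a ∈ M, r * a ∈ M := by
      intro r
      let J : AddSubgroup R :=
        { carrier := {r : R | ∀ a ∈ M, r * a ∈ M}
          zero_mem' := by intro a ha; simpa using hM0
          add_mem' := by
            intro x y hx hy a ha
            rw [add_mul]
            exact hadd _ (hx a ha) _ (hy a ha)
          neg_mem' := by
            intro x hx a ha
            rw [neg_mul]
            exact hneg _ (hx a ha) }
      have hsubJ : unitsSet R U ⊆ J := by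
        rintro _ ⟨u, hu, rfl⟩ a ha
        exact hmull u hu a ha
      have : r ∈ J := (AddSubgroup.closure_le J).2 hsubJ (hgen r)
      exact this
    have hmulR : ∀ (r : R), ∀ a ∈ M, a * r ∈ M := by
      intro r
      let J : AddSubgroup R :=
        { carrier := {r : R | ∀ a ∈ M, a * r ∈ M}
          zero_mem' := by intro a ha; simpa using hM0
          add_mem' := by
            intro x y hx hy a ha
            rw [mul_add]
            exact hadd _ (hx a ha) _ (hy a ha)
          neg_mem' := by
            intro x hx a ha
            rw [mul_neg]
            exact hneg _ (hx a ha) }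
      have hsubJ : unitsSet R U ⊆ J := by
        rintro _ ⟨u, hu, rfl⟩ a ha
        exact hmulr u hu a ha
      have : r ∈ J := (AddSubgroup.closure_le J).2 hsubJ (hgen r)
      exact this
    set I : TwoSidedIdeal R := TwoSidedIdeal.mk' M hM0 (fun {x y} hx hy => hadd x hx y hy)
      (fun {x} hx => hneg x hx) (fun {x y} hy => hmulL x y hy)
      (fun {x y} hx => hmulR y x hx) with hIdef
    have hmemI : ∀ x : R, x ∈ I ↔ x ∈ M := by
      intro x
      rw [hIdef, TwoSidedIdeal.mem_mk']
    refine ⟨I, ?_, ?_, ?_⟩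
    · intro h
      have : x₁ - x₀ ∈ (⊥ : TwoSidedIdeal R) := by
        rw [← h, hmemI]
        exact hX₀M hm₀.1
      rw [TwoSidedIdeal.mem_bot] at this
      exact hm₀.2 this
    · intro h
      have : vM ∈ M := by
        rw [← hmemI, h]
        exact TwoSidedIdeal.mem_top _
      exact hvM this
    · have : {x : R | x ∈ I} = M := by
        ext x
        exact hmemI x
      rw [this]
      exact hMh
  · -- easy direction
    rintro ⟨I, hIbot, hItop, hIhom⟩
    intro hp
    apply hp
    refine ⟨{x : R | x ∈ I}, hIhom, ?_, ?_⟩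
    · obtain ⟨m, hm, hm0⟩ : ∃ m, m ∈ I ∧ m ≠ 0 := by
        by_contra h
        push_neg at h
        apply hIbot
        apply SetLike.ext
        intro x
        rw [TwoSidedIdeal.mem_bot]
        exact ⟨fun hx => h x hx, fun hx => hx ▸ TwoSidedIdeal.zero_mem I⟩
      rw [← Nat.lt_iff_add_one_le]
      exact (Set.one_lt_ncard_iff (Set.toFinite _)).2 ⟨m, 0, hm, I.zero_mem, hm0⟩
    · obtain ⟨v, hv⟩ : ∃ v, v ∉ I := by
        by_contra h
        push_neg at h
        exact hItop (SetLike.ext fun x => ⟨fun _ => TwoSidedIdeal.mem_top _, fun _ => h x⟩)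
      have hss : {x : R | x ∈ I} ⊂ Set.univ := by
        refine ⟨Set.subset_univ _, fun h => hv (h (Set.mem_univ v))⟩
      calc {x : R | x ∈ I}.ncard < (Set.univ : Set R).ncard :=
            Set.ncard_lt_ncard hss Set.finite_univ
        _ = Fintype.card R := by rw [Set.ncard_univ, Nat.card_eq_fintype_card]
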